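/- arXiv:1301.3127 — 2 statements merged into one kernel-verified Lean document; each statement's English description precedes it below -/
import Mathlib

section
/- Soundness of the abstract transition relation: let A be a timed automaton and ≼ a preorder on valuations whose lift to configurations is a time-abstract simulation for A, with associated abstraction a and abstract transition relation ⇒_a. If (q0, a(Z0)) ⇒_a^* (q, W) and W ≠ ∅, then there exists a valuation v ∈ W such that there is a run of A from (q0, 0̄) ending in the configuration (q, v). -/
/-! Common framework: clocks, valuations, guards, zones, timed automata,
LU-bounds and LU-abstraction, following the paper's definitions. -/

abbrev Val (X : Type*) := X → NNReal

/-- Time delay: `v + δ`. -/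
def delay {X : Type*} (v : Val X) (δ : NNReal) : Val X := fun x => v x + δ

open Classical in
/-- Reset `[R]v`. -/
noncomputable def resetV {X : Type*} (R : Set X) (v : Val X) : Val X :=
  fun x => if x ∈ R then 0 else v x

/-- The valuation `0̄`. -/
def zeroVal (X : Type*) : Val X := fun _ => 0

/-- Comparison operators for atomic clock constraints. -/
inductive Cmp where
  | lt | le | eq | ge | gt

/-- Satisfaction of `a # c`. -/
def Cmp.sat : Cmp → NNReal → ℕ → Prop
  | .lt, a, c => a < (c : NNReal)
  | .le, a, c => a ≤ (c : NNReal)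
  | .eq, a, c => a = (c : NNReal)
  | .ge, a, c => (c : NNReal) ≤ a
  | .gt, a, c => (c : NNReal) < a

/-- An atomic clock constraint `x # c`. -/
structure Atomic (X : Type*) where
  clock : X
  cmp : Cmp
  bound : ℕ

/-- A guard is a finite conjunction of atomic constraints. -/
abbrev Guard (X : Type*) := List (Atomic X)

/-- `v ⊨ g`. -/
def satG {X : Type*} (v : Val X) (g : Guard X) : Prop :=
  ∀ a ∈ g, a.cmp.sat (v a.clock) a.bound

/-- Lower-bound constraints: `x > c` or `x ≥ c`. -/
def Atomic.isLower {X : Type*} (a : Atomic X) : Prop := a.cmp = Cmp.gt ∨ a.cmp = Cmp.ge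

/-- Upper-bound constraints: `x < c` or `x ≤ c`. -/
def Atomic.isUpper {X : Type*} (a : Atomic X) : Prop := a.cmp = Cmp.lt ∨ a.cmp = Cmp.le

/-- A set `W` of valuations is time-elapsed. -/
def TimeElapsed {X : Type*} (W : Set (Val X)) : Prop :=
  ∀ v ∈ W, ∀ δ : NNReal, delay v δ ∈ W

/-- `Post_{g,R}(W) = { [R]v + δ | v ∈ W, v ⊨ g, δ ∈ ℝ≥0 }`. -/
def post {X : Type*} (g : Guard X) (R : Set X) (W : Set (Val X)) : Set (Val X) :=
  { w | ∃ v ∈ W, satG v g ∧ ∃ δ : NNReal, w = delay (resetV R v) δ }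

/-- LU-bounds take values in `ℕ ∪ {−∞}`. -/
abbrev Bnd := WithBot ℕ

/-- `b < r` where `b ∈ ℕ ∪ {−∞}` and `r ∈ ℝ≥0` (every real is greater than `−∞`). -/
def Bnd.ltVal (b : Bnd) (r : NNReal) : Prop :=
  ∀ n : ℕ, b = (n : Bnd) → (n : NNReal) < r

/-- The LU-preorder `v ⊑_LU v'`. -/
def luLe {X : Type*} (L U : X → Bnd) (v v' : Val X) : Prop :=
  ∀ x, (v' x < v x → Bnd.ltVal (L x) (v' x)) ∧ (v x < v' x → Bnd.ltVal (U x) (v x))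

/-- `a_LU(W)`. -/
def aLU {X : Type*} (L U : X → Bnd) (W : Set (Val X)) : Set (Val X) :=
  { v | ∃ v' ∈ W, luLe L U v v' }

/-- A timed automaton `(Q, q0, X, T, Acc)` (finiteness of `Q`, `X`, `trans`
is imposed as hypotheses of the theorems). -/
structure TA (Q X : Type*) where
  q0 : Q
  trans : Set (Q × Guard X × Set X × Q)
  acc : Set Q

/-- One delay or action transition between configurations. -/
def step {Q X : Type*} (A : TA Q X) (c c' : Q × Val X) : Prop :=
  (c'.1 = c.1 ∧ ∃ δ : NNReal, c'.2 = delay c.2 δ) ∨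
  (∃ g R, (c.1, g, R, c'.1) ∈ A.trans ∧ satG c.2 g ∧ c'.2 = resetV R c.2)

/-- There is a run (finite alternating sequence of delay and action transitions)
from `c` to `c'`. -/
def Reach {Q X : Type*} (A : TA Q X) : (Q × Val X) → (Q × Val X) → Prop :=
  Relation.ReflTransGen (step A)

/-- Symbolic transition `(q,W) ⇒^t (q', Post_t(W))`, union over all `t ∈ T`. -/
def symbStep {Q X : Type*} (A : TA Q X) (p p' : Q × Set (Val X)) : Prop :=
  ∃ g R, (p.1, g, R, p'.1) ∈ A.trans ∧ p'.2 = post g R p.2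

/-- The initial zone `Z0 = { 0̄ + δ | δ ∈ ℝ≥0 }`. -/
def Z0 (X : Type*) : Set (Val X) := { v | ∃ δ : NNReal, v = delay (zeroVal X) δ }

/-- Time-abstract simulation for `A`. -/
def IsTASim {Q X : Type*} (A : TA Q X) (S : (Q × Val X) → (Q × Val X) → Prop) : Prop :=
  (∀ c c', S c c' → c.1 = c'.1) ∧
  (∀ (q : Q) (v v' : Val X) (δ : NNReal) (g : Guard X) (R : Set X) (q1 : Q),
    S (q, v) (q, v') → (q, g, R, q1) ∈ A.trans → satG (delay v δ) g →
    ∃ δ' : NNReal, satG (delay v' δ') g ∧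
      S (q1, resetV R (delay v δ)) (q1, resetV R (delay v' δ')))

/-- Abstraction induced by a preorder `≼` on valuations. -/
def aAbs {X : Type*} (pre : Val X → Val X → Prop) (W : Set (Val X)) : Set (Val X) :=
  { v | ∃ v' ∈ W, pre v v' }

/-- Abstract transition `(q,W) ⇒_a (q', a(W'))` whenever `W = a(W)` and `(q,W) ⇒ (q',W')`. -/
def absStep {Q X : Type*} (A : TA Q X) (pre : Val X → Val X → Prop)
    (p p' : Q × Set (Val X)) : Prop :=
  p.2 = aAbs pre p.2 ∧ ∃ W', symbStep A p (p'.1, W') ∧ p'.2 = aAbs pre W'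

lemma delay_zero {X : Type*} (v : Val X) : delay v 0 = v := by
  funext x; simp [delay]

lemma delay_delay {X : Type*} (v : Val X) (a b : NNReal) :
    delay (delay v a) b = delay v (a + b) := by
  funext x; simp [delay, add_assoc]

/-- Soundness: if `(q0, a(Z0)) ⇒_a^* (q, W)` and `W ≠ ∅`, then some
`v ∈ W` is reachable by a run of `A` from `(q0, 0̄)` ending in `(q, v)`. -/
theorem stmt_4 {Q X : Type*} [Finite Q] [Finite X] (A : TA Q X) (hT : A.trans.Finite)
    (pre : Val X → Val X → Prop)
    (hrefl : ∀ v, pre v v) (htrans : ∀ u v w, pre u v → pre v w → pre u w)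
    (hsim : IsTASim A (fun c c' => c.1 = c'.1 ∧ pre c.2 c'.2))
    (q : Q) (W : Set (Val X))
    (habs : Relation.ReflTransGen (absStep A pre) (A.q0, aAbs pre (Z0 X)) (q, W))
    (hW : W ≠ (∅ : Set (Val X))) :
    ∃ v ∈ W, Reach A (A.q0, zeroVal X) (q, v) := by
  suffices h : ∀ p : Q × Set (Val X),
      Relation.ReflTransGen (absStep A pre) (A.q0, aAbs pre (Z0 X)) p →
      ∃ W₀ : Set (Val X), TimeElapsed W₀ ∧
        (∀ w ∈ W₀, w ∈ p.2 ∧ Reach A (A.q0, zeroVal X) (p.1, w)) ∧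
        (∀ v ∈ p.2, ∃ r r₀ δ, pre v (delay r δ) ∧ pre r r₀ ∧ r₀ ∈ W₀) by
    obtain ⟨W₀, _, hmem, hrel⟩ := h (q, W) habs
    obtain ⟨v, hv⟩ := Set.nonempty_iff_ne_empty.mpr hW
    obtain ⟨r, r₀, δ, _, _, hr₀⟩ := hrel v hv
    exact ⟨r₀, (hmem r₀ hr₀).1, (hmem r₀ hr₀).2⟩
  intro p hp
  induction hp with
  | refl =>
    refine ⟨Z0 X, ?_, ?_, ?_⟩
    · rintro v ⟨δ, hv⟩ δ'
      exact ⟨δ + δ', by rw [hv, delay_delay]⟩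
    · rintro w ⟨δ, hw⟩
      refine ⟨⟨w, ⟨δ, hw⟩, hrefl w⟩, ?_⟩
      exact Relation.ReflTransGen.single (Or.inl ⟨rfl, δ, hw⟩)
    · rintro v ⟨z, ⟨δ, hz⟩, hvz⟩
      refine ⟨zeroVal X, zeroVal X, δ, ?_, hrefl _, ⟨0, (delay_zero _).symm⟩⟩
      rwa [hz] at hvz
  | @tail b c hp hstep ih =>
    obtain ⟨W₀, hTE, hmem, hrel⟩ := ih
    obtain ⟨hfix, W', ⟨g, R, htr, hW'⟩, hc2⟩ := hstep
    have hW2 : W' = post g R b.2 := hW'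
    have htr2 : (b.1, g, R, c.1) ∈ A.trans := htr
    refine ⟨post g R W₀, ?_, ?_, ?_⟩
    · rintro v ⟨u, hu, hg, δ, hv⟩ δ'
      exact ⟨u, hu, hg, δ + δ', by rw [hv, delay_delay]⟩
    · rintro w ⟨u₀, hu₀, hg, δ, hw⟩
      constructor
      · rw [hc2]
        exact ⟨w, by rw [hW2]; exact ⟨u₀, (hmem u₀ hu₀).1, hg, δ, hw⟩, hrefl w⟩
      · have h1 : step A (b.1, u₀) (c.1, resetV R u₀) := Or.inr ⟨g, R, htr2, hg, rfl⟩
        have h2 : step A (c.1, resetV R u₀) (c.1, w) := Or.inl ⟨rfl, δ, hw⟩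
        exact ((hmem u₀ hu₀).2.tail h1).tail h2
    · intro v hv
      rw [hc2] at hv
      obtain ⟨w, hw, hvw⟩ := hv
      rw [hW2] at hw
      obtain ⟨u, hu, hgu, δw, hwd⟩ := hw
      obtain ⟨ru, ru₀, δu, hpreu, hpreru, hru₀⟩ := hrel u hu
      have hg0 : satG (delay u 0) g := by rwa [delay_zero]
      obtain ⟨δ1, hg1, _, hpre1⟩ :=
        hsim.2 b.1 u (delay ru δu) 0 g R c.1 ⟨rfl, hpreu⟩ htr2 hg0
      rw [delay_zero, delay_delay] at hpre1
      rw [delay_delay] at hg1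
      obtain ⟨δ2, hg2, _, hpre2⟩ :=
        hsim.2 b.1 ru ru₀ (δu + δ1) g R c.1 ⟨rfl, hpreru⟩ htr2 hg1
      refine ⟨resetV R u, resetV R (delay ru₀ δ2), δw, ?_, htrans _ _ _ hpre1 hpre2, ?_⟩
      · rwa [← hwd]
      · exact ⟨delay ru₀ δ2, hTE ru₀ hru₀ δ2, hg2, 0, (delay_zero _).symm⟩
end

section
/- Let R ⊆ X and let L, U and L', U' be LU-bound functions such that L'(x) ≤ L(x) and U'(x) ≤ U(x) for every clock x ∉ R. Then for every set of valuations Z, { [R]v | v ∈ a_LU(Z) } ⊆ a_{L'U'}({ [R]v | v ∈ Z }). In particular, if v ⊑_LU v' then [R]v ⊑_{L'U'} [R]v'. -/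
lemma ltVal_mono (b b' : Bnd) (r : NNReal) (h : b' ≤ b) (hb : Bnd.ltVal b r) :
    Bnd.ltVal b' r := by
  intro n hn
  subst hn
  rcases b with _ | m
  · exact (WithBot.not_coe_le_bot n h).elim
  · have hnm : n ≤ m := by exact_mod_cast WithBot.coe_le_coe.mp h
    exact lt_of_le_of_lt (by exact_mod_cast hnm) (hb m rfl)

lemma key {X : Type*} (R : Set X) (L U L' U' : X → Bnd)
    (hL : ∀ x ∉ R, L' x ≤ L x) (hU : ∀ x ∉ R, U' x ≤ U x)
    (v v' : Val X) (h : luLe L U v v') : luLe L' U' (resetV R v) (resetV R v') := by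
  intro x
  by_cases hx : x ∈ R
  · simp [resetV, hx]
  · simp only [resetV, if_neg hx]
    exact ⟨fun hlt => ltVal_mono _ _ _ (hL x hx) ((h x).1 hlt),
           fun hlt => ltVal_mono _ _ _ (hU x hx) ((h x).2 hlt)⟩

/-- resets are compatible with the LU-abstraction provided the bounds
only decrease on non-reset clocks. -/
theorem stmt_8 {X : Type*} [Finite X] (R : Set X) (L U L' U' : X → Bnd)
    (hL : ∀ x ∉ R, L' x ≤ L x) (hU : ∀ x ∉ R, U' x ≤ U x) :
    (∀ Z : Set (Val X),
      (fun v => resetV R v) '' (aLU L U Z) ⊆ aLU L' U' ((fun v => resetV R v) '' Z)) ∧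
    (∀ v v' : Val X, luLe L U v v' → luLe L' U' (resetV R v) (resetV R v')) := by
  refine ⟨fun Z w hw => ?_, fun v v' h => key R L U L' U' hL hU v v' h⟩
  obtain ⟨u, ⟨u', hu', hle⟩, rfl⟩ := hw
  exact ⟨resetV R u', ⟨u', hu', rfl⟩, key R L U L' U' hL hU u u' hle⟩
end
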